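/- Let n ≥ 1 and 0 ≤ l ≤ n be integers. For i ∈ {0, …, 2^l−1} and j ∈ {0, …, 2^{n−l}−1}, define the block F_{i,j} ∈ ℂ^{2^{n−l} × 2^l} of the 2^n × 2^n DFT matrix by F_{i,j}[r, v] = exp(−2πi(i·2^{n−l}+r)(j·2^l+v)/2^n) for r ∈ {0,…,2^{n−l}−1}, v ∈ {0,…,2^l−1}. Then F_{i,j} = D_j · F_{0,0} · D_i, where D_j is the 2^{n−l} × 2^{n−l} diagonal matrix with diagonal entries exp(−2πi·r·j/2^{n−l}) for r ∈ {0,…,2^{n−l}−1}, and D_i is the 2^l × 2^l diagonal matrix with diagonal entries exp(−2πi·i·v/2^l) for v ∈ {0,…,2^l−1}. -/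
import Mathlib


/-- Complementary low-rank structure of the DFT: the `(i,j)`-th block of
the `2^n × 2^n` DFT matrix at level `l` satisfies `F_{i,j} = D_j · F_{0,0} · D_i` for the
stated unitary diagonal matrices. -/
theorem dft_block_structure (n l : ℕ) (hn : 1 ≤ n) (hl : l ≤ n)
    (i : Fin (2 ^ l)) (j : Fin (2 ^ (n - l))) :
    (Matrix.of fun (r : Fin (2 ^ (n - l))) (v : Fin (2 ^ l)) =>
        Complex.exp (-2 * (Real.pi : ℂ) * Complex.I *
          (((i : ℕ) : ℂ) * 2 ^ (n - l) + ((r : ℕ) : ℂ)) *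
          (((j : ℕ) : ℂ) * 2 ^ l + ((v : ℕ) : ℂ)) / 2 ^ n)) =
      (Matrix.diagonal fun r : Fin (2 ^ (n - l)) =>
          Complex.exp (-2 * (Real.pi : ℂ) * Complex.I * ((r : ℕ) : ℂ) * ((j : ℕ) : ℂ) /
            2 ^ (n - l))) *
        (Matrix.of fun (r : Fin (2 ^ (n - l))) (v : Fin (2 ^ l)) =>
          Complex.exp (-2 * (Real.pi : ℂ) * Complex.I * ((r : ℕ) : ℂ) * ((v : ℕ) : ℂ) /
            2 ^ n)) *
        (Matrix.diagonal fun v : Fin (2 ^ l) =>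
          Complex.exp (-2 * (Real.pi : ℂ) * Complex.I * ((i : ℕ) : ℂ) * ((v : ℕ) : ℂ) /
            2 ^ l)) := by
  have h2 : (2 : ℂ) ^ n = 2 ^ (n - l) * 2 ^ l := by
    rw [← pow_add, Nat.sub_add_cancel hl]
  have ha : ((2 : ℂ) ^ (n - l)) ≠ 0 := pow_ne_zero _ two_ne_zero
  have hb : ((2 : ℂ) ^ l) ≠ 0 := pow_ne_zero _ two_ne_zero
  ext r v
  simp only [Matrix.diagonal_mul, Matrix.mul_diagonal, Matrix.of_apply,
    ← Complex.exp_add]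
  calc Complex.exp (-2 * (Real.pi : ℂ) * Complex.I *
          (((i : ℕ) : ℂ) * 2 ^ (n - l) + ((r : ℕ) : ℂ)) *
          (((j : ℕ) : ℂ) * 2 ^ l + ((v : ℕ) : ℂ)) / 2 ^ n) =
      Complex.exp ((-2 * (Real.pi : ℂ) * Complex.I * ((r : ℕ) : ℂ) * ((j : ℕ) : ℂ) /
            2 ^ (n - l) +
          -2 * (Real.pi : ℂ) * Complex.I * ((r : ℕ) : ℂ) * ((v : ℕ) : ℂ) / 2 ^ n +
          -2 * (Real.pi : ℂ) * Complex.I * ((i : ℕ) : ℂ) * ((v : ℕ) : ℂ) / 2 ^ l) +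
        (-((i : ℕ) * (j : ℕ) : ℤ)) * (2 * (Real.pi : ℂ) * Complex.I)) := by
        congr 1
        rw [h2]
        field_simp
        push_cast
        ring
    _ = _ := by
        rw [Complex.exp_add, ← Int.cast_neg, Complex.exp_int_mul_two_pi_mul_I, mul_one]
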